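/- For λ ≥ 1, the function s(t) = √(4λ − (t − 1 − λ)²)/(2πt) on the interval ((1−√λ)², (1+√λ)²) (and 0 elsewhere) is a probability density: s ≥ 0 on its support and ∫_ℝ s(t) dt = 1. -/

import Mathlib

open MeasureTheory Real

theorem stmt13 (lam : ℝ) (hlam : 1 ≤ lam)
    (s : ℝ → ℝ)
    (hs : ∀ t : ℝ, s t =
      if t ∈ Set.Ioo ((1 - Real.sqrt lam) ^ 2) ((1 + Real.sqrt lam) ^ 2) then
        Real.sqrt (4 * lam - (t - 1 - lam) ^ 2) / (2 * Real.pi * t)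
      else 0) :
    (∀ t : ℝ, 0 ≤ s t) ∧ ∫ t : ℝ, s t = 1 := by
  have hl0 : (0:ℝ) ≤ lam := zero_le_one.trans hlam
  obtain ⟨r, hr1, rfl⟩ : ∃ r : ℝ, 1 ≤ r ∧ lam = r ^ 2 :=
    ⟨Real.sqrt lam, Real.one_le_sqrt.mpr hlam, (Real.sq_sqrt hl0).symm⟩
  have hr0 : (0:ℝ) < r := lt_of_lt_of_le one_pos hr1
  rw [show Real.sqrt (r ^ 2) = r from Real.sqrt_sq hr0.le] at hs
  set a : ℝ := (1 - r) ^ 2 with ha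
  set b : ℝ := (1 + r) ^ 2 with hb
  have hab : a ≤ b := by nlinarith
  -- nonnegativity
  have hpos : ∀ t : ℝ, 0 ≤ s t := by
    intro t
    rw [hs t]
    split_ifs with h
    · have ht : 0 < t := lt_of_le_of_lt (sq_nonneg _) h.1
      exact div_nonneg (Real.sqrt_nonneg _)
        (by nlinarith [mul_pos Real.pi_pos ht])
    · exact le_refl 0
  refine ⟨hpos, ?_⟩
  set g : ℝ → ℝ := fun t => Real.sqrt (4 * r ^ 2 - (t - 1 - r ^ 2) ^ 2) / (2 * Real.pi * t)
    with hg
  set F : ℝ → ℝ := fun t =>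
    (Real.sqrt (4 * r ^ 2 - (t - 1 - r ^ 2) ^ 2)
      + (1 + r ^ 2) * Real.arcsin ((t - 1 - r ^ 2) / (2 * r))
      - (r ^ 2 - 1) * Real.arcsin (((1 + r ^ 2) * t - (r ^ 2 - 1) ^ 2) / (2 * r * t)))
    / (2 * Real.pi) with hF
  -- basic facts on Ioo a b
  have ht0 : ∀ x ∈ Set.Ioo a b, 0 < x := fun x hx => lt_of_le_of_lt (sq_nonneg _) hx.1
  have hQpos : ∀ x ∈ Set.Ioo a b, 0 < 4 * r ^ 2 - (x - 1 - r ^ 2) ^ 2 := by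
    intro x hx
    obtain ⟨h1, h2⟩ := hx
    nlinarith [mul_pos (sub_pos.2 h1) (sub_pos.2 h2)]
  have hgpos : ∀ x ∈ Set.Ioo a b, 0 ≤ g x := by
    intro x hx
    exact div_nonneg (Real.sqrt_nonneg _)
      (by nlinarith [mul_pos Real.pi_pos (ht0 x hx)])
  -- derivative
  have hderiv : ∀ x ∈ Set.Ioo a b, HasDerivAt F (g x) x := by
    intro x hx
    have hx0 : 0 < x := ht0 x hx
    have hQ : 0 < 4 * r ^ 2 - (x - 1 - r ^ 2) ^ 2 := hQpos x hx
    set q := Real.sqrt (4 * r ^ 2 - (x - 1 - r ^ 2) ^ 2) with hqdef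
    have hq0 : 0 < q := Real.sqrt_pos.mpr hQ
    have hq2 : q ^ 2 = 4 * r ^ 2 - (x - 1 - r ^ 2) ^ 2 := Real.sq_sqrt hQ.le
    -- T1
    have hpoly : HasDerivAt (fun t : ℝ => 4 * r ^ 2 - (t - 1 - r ^ 2) ^ 2)
        (-(2 * (x - 1 - r ^ 2))) x := by
      have h := (((hasDerivAt_id x).sub_const 1).sub_const (r ^ 2)).pow 2
      refine ((hasDerivAt_const x (4 * r ^ 2)).sub h).congr_deriv ?_
      simp
    have hT1 : HasDerivAt (fun t : ℝ => Real.sqrt (4 * r ^ 2 - (t - 1 - r ^ 2) ^ 2))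
        (-(x - 1 - r ^ 2) / q) x := by
      have h := hpoly.sqrt hQ.ne'
      convert h using 1
      rw [← hqdef]
      field_simp
    -- T2
    have habs1 : ((x - 1 - r ^ 2) / (2 * r)) ^ 2 < 1 := by
      rw [div_pow, div_lt_one (by positivity)]
      nlinarith [hQ]
    have hne1 : (x - 1 - r ^ 2) / (2 * r) ≠ -1 := by
      intro h; rw [h] at habs1; norm_num at habs1
    have hne1' : (x - 1 - r ^ 2) / (2 * r) ≠ 1 := by
      intro h; rw [h] at habs1; norm_num at habs1
    have hu : HasDerivAt (fun t : ℝ => (t - 1 - r ^ 2) / (2 * r)) (1 / (2 * r)) x := by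
      simpa using (((hasDerivAt_id x).sub_const 1).sub_const (r ^ 2)).div_const (2 * r)
    have hsq1 : Real.sqrt (1 - ((x - 1 - r ^ 2) / (2 * r)) ^ 2) = q / (2 * r) := by
      have h5 : (q / (2 * r)) ^ 2 = (4 * r ^ 2 - (x - 1 - r ^ 2) ^ 2) / (2 * r) ^ 2 := by
        rw [div_pow, hq2]
      have h6 : (1:ℝ) - ((x - 1 - r ^ 2) / (2 * r)) ^ 2 = (q / (2 * r)) ^ 2 := by
        rw [h5]; field_simp; ring
      rw [h6]
      exact Real.sqrt_sq (by positivity)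
    have hT2 : HasDerivAt
        (fun t : ℝ => (1 + r ^ 2) * Real.arcsin ((t - 1 - r ^ 2) / (2 * r)))
        ((1 + r ^ 2) / q) x := by
      have h := ((Real.hasDerivAt_arcsin hne1 hne1').comp x hu).const_mul (1 + r ^ 2)
      refine h.congr_deriv ?_
      rw [hsq1]
      field_simp
    -- T3
    have hT3 : HasDerivAt
        (fun t : ℝ => (r ^ 2 - 1) *
          Real.arcsin (((1 + r ^ 2) * t - (r ^ 2 - 1) ^ 2) / (2 * r * t)))
        ((r ^ 2 - 1) ^ 2 / (x * q)) x := by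
      rcases eq_or_lt_of_le hr1 with hre | hrgt
      · subst hre
        have hfun : (fun t : ℝ => ((1:ℝ) ^ 2 - 1) *
            Real.arcsin (((1 + (1:ℝ) ^ 2) * t - ((1:ℝ) ^ 2 - 1) ^ 2) / (2 * 1 * t)))
            = fun _ => (0:ℝ) := by
          funext t; norm_num
        rw [hfun]
        have : ((1:ℝ) ^ 2 - 1) ^ 2 / (x * q) = 0 := by norm_num
        rw [this]
        exact hasDerivAt_const x 0
      · have hc : 0 < r ^ 2 - 1 := by nlinarith
        have hden : (2 * r * x) ≠ 0 := by positivity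
        have hgd : HasDerivAt (fun t : ℝ => ((1 + r ^ 2) * t - (r ^ 2 - 1) ^ 2) / (2 * r * t))
            (((1 + r ^ 2) * (2 * r * x) - ((1 + r ^ 2) * x - (r ^ 2 - 1) ^ 2) * (2 * r))
              / (2 * r * x) ^ 2) x := by
          have h1 : HasDerivAt (fun t : ℝ => (1 + r ^ 2) * t - (r ^ 2 - 1) ^ 2) (1 + r ^ 2) x := by
            simpa using ((hasDerivAt_id x).const_mul (1 + r ^ 2)).sub_const ((r ^ 2 - 1) ^ 2)
          have h2 : HasDerivAt (fun t : ℝ => 2 * r * t) (2 * r) x := by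
            simpa using (hasDerivAt_id x).const_mul (2 * r)
          exact h1.div h2 hden
        have hgabs : (((1 + r ^ 2) * x - (r ^ 2 - 1) ^ 2) / (2 * r * x)) ^ 2 < 1 := by
          rw [div_pow, div_lt_one (by positivity)]
          nlinarith [mul_pos (mul_pos hc hc) hQ]
        have hne3 : ((1 + r ^ 2) * x - (r ^ 2 - 1) ^ 2) / (2 * r * x) ≠ -1 := by
          intro h; rw [h] at hgabs; norm_num at hgabs
        have hne3' : ((1 + r ^ 2) * x - (r ^ 2 - 1) ^ 2) / (2 * r * x) ≠ 1 := by
          intro h; rw [h] at hgabs; norm_num at hgabs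
        have hsq3 : Real.sqrt (1 - (((1 + r ^ 2) * x - (r ^ 2 - 1) ^ 2) / (2 * r * x)) ^ 2)
            = (r ^ 2 - 1) * q / (2 * r * x) := by
          have h5 : ((r ^ 2 - 1) * q / (2 * r * x)) ^ 2
              = (r ^ 2 - 1) ^ 2 * (4 * r ^ 2 - (x - 1 - r ^ 2) ^ 2) / (2 * r * x) ^ 2 := by
            rw [div_pow, mul_pow, hq2]
          have h6 : (1:ℝ) - (((1 + r ^ 2) * x - (r ^ 2 - 1) ^ 2) / (2 * r * x)) ^ 2
              = ((r ^ 2 - 1) * q / (2 * r * x)) ^ 2 := by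
            rw [h5]; field_simp; ring
          rw [h6]
          exact Real.sqrt_sq (by positivity)
        have h := ((Real.hasDerivAt_arcsin hne3 hne3').comp x hgd).const_mul (r ^ 2 - 1)
        refine h.congr_deriv ?_
        rw [hsq3]
        field_simp
        ring
    have hsum := ((hT1.add hT2).sub hT3).div_const (2 * Real.pi)
    have hgx : g x = (-(x - 1 - r ^ 2) / q + (1 + r ^ 2) / q - (r ^ 2 - 1) ^ 2 / (x * q))
        / (2 * Real.pi) := by
      simp only [hg]
      rw [← hqdef]
      rw [div_eq_div_iff (by positivity) (by positivity)]
      field_simp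
      linear_combination hq2
    rw [hF, hgx]
    exact hsum
  -- continuity
  have hcont : ContinuousOn F (Set.Icc a b) := by
    rw [hF]
    apply ContinuousOn.div_const
    apply ContinuousOn.sub
    · apply ContinuousOn.add
      · exact (Real.continuous_sqrt.comp
          (continuous_const.sub (((continuous_id.sub continuous_const).sub
            continuous_const).pow 2))).continuousOn
      · exact (continuous_const.mul (Real.continuous_arcsin.comp
          ((((continuous_id.sub continuous_const).sub continuous_const).div_const _)))).continuousOn
    · rcases eq_or_lt_of_le hr1 with hre | hrgt
      · subst hre
        norm_num
        exact continuousOn_const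
      · have hane : 0 < a := by
          have h1 : (1:ℝ) - r ≠ 0 := by nlinarith
          exact lt_of_le_of_ne (sq_nonneg _) (Ne.symm (pow_ne_zero 2 h1))
        apply ContinuousOn.mul continuousOn_const
        apply Real.continuous_arcsin.comp_continuousOn
        apply ContinuousOn.div
        · exact ((continuous_const.mul continuous_id).sub continuous_const).continuousOn
        · exact (continuous_const.mul continuous_id).continuousOn
        · intro t ht
          have htt : 0 < t := lt_of_lt_of_le hane ht.1
          positivity
  -- integrability
  have hinteg : IntervalIntegrable g volume a b := by
    rw [intervalIntegrable_iff_integrableOn_Ioo_of_le hab]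
    exact (intervalIntegral.integrableOn_deriv_of_nonneg hcont hderiv hgpos).mono_set
      Set.Ioo_subset_Ioc_self
  -- endpoint values
  have hFb : F b = ((1 + r ^ 2) * (Real.pi / 2) - (r ^ 2 - 1) * (Real.pi / 2)) / (2 * Real.pi) := by
    rw [hF, hb]
    have e1 : 4 * r ^ 2 - ((1 + r) ^ 2 - 1 - r ^ 2) ^ 2 = 0 := by ring
    have e2 : ((1 + r) ^ 2 - 1 - r ^ 2) / (2 * r) = 1 := by
      rw [div_eq_one_iff_eq (by positivity)]; ring
    have e3 : (r ^ 2 - 1) * Real.arcsin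
        (((1 + r ^ 2) * (1 + r) ^ 2 - (r ^ 2 - 1) ^ 2) / (2 * r * (1 + r) ^ 2))
        = (r ^ 2 - 1) * (Real.pi / 2) := by
      have e4 : ((1 + r ^ 2) * (1 + r) ^ 2 - (r ^ 2 - 1) ^ 2) / (2 * r * (1 + r) ^ 2) = 1 := by
        rw [div_eq_one_iff_eq (by positivity)]; ring
      rw [e4, Real.arcsin_one]
    simp only [e1, Real.sqrt_zero, e2, Real.arcsin_one, e3]
    ring
  have hFa : F a = (-((1 + r ^ 2) * (Real.pi / 2)) + (r ^ 2 - 1) * (Real.pi / 2)) / (2 * Real.pi) := by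
    rw [hF, ha]
    have e1 : 4 * r ^ 2 - ((1 - r) ^ 2 - 1 - r ^ 2) ^ 2 = 0 := by ring
    have e2 : ((1 - r) ^ 2 - 1 - r ^ 2) / (2 * r) = -1 := by
      rw [div_eq_iff (by positivity)]; ring
    have e3 : (r ^ 2 - 1) * Real.arcsin
        (((1 + r ^ 2) * (1 - r) ^ 2 - (r ^ 2 - 1) ^ 2) / (2 * r * (1 - r) ^ 2))
        = (r ^ 2 - 1) * (-(Real.pi / 2)) := by
      rcases eq_or_lt_of_le hr1 with hre | hrgt
      · rw [← hre]; norm_num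
      · have h1 : (0:ℝ) < (1 - r) ^ 2 := by nlinarith
        have e4 : ((1 + r ^ 2) * (1 - r) ^ 2 - (r ^ 2 - 1) ^ 2) / (2 * r * (1 - r) ^ 2) = -1 := by
          rw [div_eq_iff (by positivity)]; ring
        rw [e4, Real.arcsin_neg_one]
    simp only [e1, Real.sqrt_zero, e2, Real.arcsin_neg_one, e3]
    ring
  -- the integral
  have hind : s = Set.indicator (Set.Ioo a b) g := by
    funext t
    rw [hs t, Set.indicator_apply]
  calc ∫ t : ℝ, s t = ∫ t in Set.Ioo a b, g t := by
        rw [hind, MeasureTheory.integral_indicator measurableSet_Ioo]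
    _ = ∫ t in Set.Ioc a b, g t := MeasureTheory.integral_Ioc_eq_integral_Ioo.symm
    _ = ∫ t in a..b, g t := (intervalIntegral.integral_of_le hab).symm
    _ = F b - F a := intervalIntegral.integral_eq_sub_of_hasDerivAt_of_le hab hcont hderiv hinteg
    _ = 1 := by
        rw [hFb, hFa]
        field_simp
        ring
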